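/- arXiv:2302.13727 — 3 statements merged into one kernel-verified Lean document; each statement's English description precedes it below -/
import Mathlib

section
/- Let 0 < α < N with α > 1, and let f be a nonnegative radially symmetric function in L¹(ℝᴺ) satisfying f(|x|)·|x|^N → 0 as |x| → ∞. Then ∫_{ℝᴺ} f(y)/|x−y|^{N−α} dy = ‖f‖_{L¹}/|x|^{N−α} + o(|x|^{−(N−α)}) as |x| → ∞. -/
open MeasureTheory Filter Metric Set
open scoped ENNReal Topology

lemma tendsto_div_add_const (c : ℝ) : Tendsto (fun t : ℝ => t / (t + c)) atTop (𝓝 1) := by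
  have h0 : Tendsto (fun t : ℝ => 1 - c / (t + c)) atTop (𝓝 (1 - 0)) :=
    tendsto_const_nhds.sub
      (tendsto_const_nhds.div_atTop (tendsto_atTop_add_const_right _ c tendsto_id))
  rw [sub_zero] at h0
  refine h0.congr' ?_
  filter_upwards [eventually_ge_atTop (|c| + 1)] with t ht
  have h1 : 0 < t + c := by
    have := neg_abs_le c; linarith
  field_simp
  ring

lemma tendsto_div_sub_const (c : ℝ) : Tendsto (fun t : ℝ => t / (t - c)) atTop (𝓝 1) := by
  simpa [sub_eq_add_neg] using tendsto_div_add_const (-c)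

variable {N : ℕ}

lemma aux_meas (p : ℝ) (x : EuclideanSpace ℝ (Fin N)) :
    Measurable (fun z : EuclideanSpace ℝ (Fin N) => ENNReal.ofReal (‖x - z‖ ^ (-p))) := by
  fun_prop

lemma aux_scaling (hN : 0 < N) {p : ℝ} (hp0 : 0 < p) {ρ : ℝ} (hρ : 0 < ρ) :
    ∫⁻ z in closedBall (0 : EuclideanSpace ℝ (Fin N)) ρ, ENNReal.ofReal (‖z‖ ^ (-p))
      = ENNReal.ofReal (ρ ^ ((N : ℝ) - p)) *
        ∫⁻ z in closedBall (0 : EuclideanSpace ℝ (Fin N)) 1, ENNReal.ofReal (‖z‖ ^ (-p)) := by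
  set E := EuclideanSpace ℝ (Fin N)
  set φ : E → ℝ≥0∞ := fun z => ENNReal.ofReal (‖z‖ ^ (-p)) with hφdef
  have hφ : Measurable φ := by fun_prop
  set ψ : E → ℝ≥0∞ := (closedBall (0 : E) 1).indicator φ with hψdef
  have hψ : Measurable ψ := hφ.indicator measurableSet_closedBall
  have hρ' : (ρ : ℝ)⁻¹ ≠ 0 := inv_ne_zero hρ.ne'
  have hmap : ∫⁻ z, ψ (ρ⁻¹ • z) = ENNReal.ofReal (ρ ^ N) * ∫⁻ z, ψ z := by
    have h1 : ∫⁻ z, ψ (ρ⁻¹ • z)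
        = ∫⁻ z, ψ z ∂(Measure.map (fun z : E => ρ⁻¹ • z) volume) :=
      (lintegral_map hψ (measurable_const_smul _)).symm
    rw [h1, Measure.map_addHaar_smul volume hρ', lintegral_smul_measure]
    congr 1
    rw [finrank_euclideanSpace_fin]
    rw [abs_of_nonneg (by positivity)]
    rw [← inv_pow, inv_inv]
  have hpt : ∀ z : E, ψ (ρ⁻¹ • z)
      = (closedBall (0 : E) ρ).indicator (fun z => ENNReal.ofReal (ρ ^ p) * φ z) z := by
    intro z
    have hmem : ρ⁻¹ • z ∈ closedBall (0 : E) 1 ↔ z ∈ closedBall (0 : E) ρ := by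
      simp only [mem_closedBall, dist_zero_right, norm_smul, norm_inv, Real.norm_eq_abs,
        abs_of_pos hρ]
      rw [inv_mul_le_iff₀ hρ, mul_one]
    have hval : φ (ρ⁻¹ • z) = ENNReal.ofReal (ρ ^ p) * φ z := by
      simp only [hφdef, norm_smul, norm_inv, Real.norm_eq_abs, abs_of_pos hρ]
      rw [Real.mul_rpow (by positivity) (norm_nonneg z),
        Real.inv_rpow hρ.le, ← Real.rpow_neg hρ.le, neg_neg,
        ENNReal.ofReal_mul (by positivity)]
    by_cases h : z ∈ closedBall (0 : E) ρ
    · rw [hψdef, Set.indicator_of_mem (hmem.mpr h), Set.indicator_of_mem h, hval]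
    · rw [hψdef, Set.indicator_of_notMem (fun hh => h (hmem.mp hh)),
        Set.indicator_of_notMem h]
  have hLHS : ∫⁻ z, ψ (ρ⁻¹ • z)
      = ENNReal.ofReal (ρ ^ p) * ∫⁻ z in closedBall (0 : E) ρ, φ z := by
    simp_rw [hpt]
    rw [lintegral_indicator measurableSet_closedBall, lintegral_const_mul _ hφ]
  have hRHS : ∫⁻ z, ψ z = ∫⁻ z in closedBall (0 : E) 1, φ z :=
    lintegral_indicator measurableSet_closedBall φ
  have heq : ENNReal.ofReal (ρ ^ p) * ∫⁻ z in closedBall (0 : E) ρ, φ z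
      = ENNReal.ofReal (ρ ^ N) * ∫⁻ z in closedBall (0 : E) 1, φ z := by
    rw [← hLHS, hmap, hRHS]
  have h0 : ENNReal.ofReal (ρ ^ p) ≠ 0 := by
    simp [ENNReal.ofReal_eq_zero, not_le]
    positivity
  have htop : ENNReal.ofReal (ρ ^ p) ≠ ⊤ := ENNReal.ofReal_ne_top
  refine (ENNReal.mul_right_inj h0 htop).mp ?_
  rw [heq, ← mul_assoc, ← ENNReal.ofReal_mul (by positivity), ← Real.rpow_add hρ]
  congr 2
  rw [← Real.rpow_natCast ρ N]
  congr 1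
  ring

lemma aux_fin (hN : 0 < N) {p : ℝ} (hp0 : 0 < p) (hpN : p < N) :
    ∫⁻ z in closedBall (0 : EuclideanSpace ℝ (Fin N)) 1, ENNReal.ofReal (‖z‖ ^ (-p)) < ⊤ := by
  haveI : Nonempty (Fin N) := ⟨⟨0, hN⟩⟩
  set E := EuclideanSpace ℝ (Fin N)
  set φ : E → ℝ≥0∞ := fun z => ENNReal.ofReal (‖z‖ ^ (-p)) with hφdef
  set q : ℝ := 2⁻¹ with hq
  have hq0 : (0 : ℝ) < q := by norm_num
  have hq1 : q < 1 := by norm_num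
  set D : ℕ → Set E := fun k => closedBall 0 (q ^ k) \ closedBall 0 (q ^ (k + 1)) with hD
  have hsub : closedBall (0 : E) 1 ⊆ {0} ∪ ⋃ k, D k := by
    intro z hz
    rcases eq_or_ne z 0 with rfl | hz0
    · exact Or.inl rfl
    refine Or.inr ?_
    have hz1 : ‖z‖ ≤ 1 := by simpa [dist_zero_right] using hz
    have hzpos : 0 < ‖z‖ := norm_pos_iff.mpr hz0
    have hex : ∃ n : ℕ, q ^ (n + 1) < ‖z‖ := by
      obtain ⟨n, hn⟩ := exists_pow_lt_of_lt_one hzpos hq1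
      exact ⟨n, lt_of_le_of_lt (pow_le_pow_of_le_one hq0.le hq1.le (Nat.le_succ n)) hn⟩
    set n := Nat.find hex with hn
    have hlt : q ^ (n + 1) < ‖z‖ := Nat.find_spec hex
    have hle : ‖z‖ ≤ q ^ n := by
      rcases Nat.eq_zero_or_pos n with h0 | h0
      · rw [h0, pow_zero]; exact hz1
      · have := Nat.find_min hex (m := n - 1) (by omega)
        push_neg at this
        have h1 : n - 1 + 1 = n := by omega
        rwa [h1] at this
    exact mem_iUnion.mpr ⟨n, by
      simp only [hD, mem_diff, mem_closedBall, dist_zero_right, not_le]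
      exact ⟨hle, hlt⟩⟩
  set V : ℝ≥0∞ := volume (ball (0 : E) 1) with hV
  have hVfin : V < ⊤ := measure_ball_lt_top
  set s : ℝ≥0∞ := ENNReal.ofReal (q ^ ((N : ℝ) - p)) with hs
  have hs1 : s < 1 := by
    rw [hs, ENNReal.ofReal_lt_one]
    exact Real.rpow_lt_one hq0.le hq1 (by linarith)
  have hterm : ∀ k : ℕ, ∫⁻ z in D k, φ z ≤ ENNReal.ofReal (2 ^ p) * s ^ k * V := by
    intro k
    have hpow : (0 : ℝ) < q ^ (k + 1) := pow_pos hq0 _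
    have hb : ∀ z ∈ D k, φ z ≤ ENNReal.ofReal ((q ^ (k + 1)) ^ (-p)) := by
      intro z hz
      have h1 : q ^ (k + 1) < ‖z‖ := by
        have := hz.2
        simpa [dist_zero_right, not_le] using this
      exact ENNReal.ofReal_le_ofReal
        (Real.rpow_le_rpow_of_nonpos hpow h1.le (neg_nonpos.mpr hp0.le))
    calc ∫⁻ z in D k, φ z ≤ ∫⁻ _ in D k, ENNReal.ofReal ((q ^ (k + 1)) ^ (-p)) :=
          setLIntegral_mono measurable_const hb
      _ = ENNReal.ofReal ((q ^ (k + 1)) ^ (-p)) * volume (D k) := by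
          rw [setLIntegral_const]
      _ ≤ ENNReal.ofReal ((q ^ (k + 1)) ^ (-p)) * volume (closedBall (0 : E) (q ^ k)) :=
          mul_le_mul_right (measure_mono diff_subset) _
      _ = ENNReal.ofReal ((q ^ (k + 1)) ^ (-p)) * (ENNReal.ofReal ((q ^ k) ^ N) * V) := by
          rw [Measure.addHaar_closedBall _ _ (by positivity), finrank_euclideanSpace_fin]
      _ = ENNReal.ofReal (2 ^ p) * s ^ k * V := by
          rw [← mul_assoc, ← ENNReal.ofReal_mul (by positivity)]
          congr 1
          rw [hs, ← ENNReal.ofReal_pow (by positivity), ← ENNReal.ofReal_mul (by positivity)]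
          congr 1
          have e1 : ((q : ℝ) ^ (k + 1)) ^ (-p) = q ^ (((k : ℝ) + 1) * (-p)) := by
            rw [← Real.rpow_natCast q (k + 1), ← Real.rpow_mul hq0.le]
            push_cast
            ring_nf
          have e2 : ((q : ℝ) ^ k) ^ N = q ^ ((k : ℝ) * (N : ℝ)) := by
            rw [← pow_mul, ← Real.rpow_natCast q (k * N)]
            push_cast
            ring_nf
          have e3 : ((q : ℝ) ^ ((N : ℝ) - p)) ^ k = q ^ ((k : ℝ) * ((N : ℝ) - p)) := by
            rw [← Real.rpow_natCast (q ^ ((N : ℝ) - p)) k, ← Real.rpow_mul hq0.le]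
            ring_nf
          rw [e1, e2, e3, ← Real.rpow_add hq0, hq]
          have e4 : (2 : ℝ) ^ p = (2 : ℝ)⁻¹ ^ (-p) := by
            rw [Real.inv_rpow (by norm_num), ← Real.rpow_neg (by norm_num), neg_neg]
          rw [e4, ← Real.rpow_add (by norm_num : (0:ℝ) < 2⁻¹)]
          congr 1
          ring
  have hsum : ∑' k, (ENNReal.ofReal (2 ^ p) * s ^ k * V) < ⊤ := by
    have : ∑' k, (ENNReal.ofReal (2 ^ p) * s ^ k * V)
        = ENNReal.ofReal (2 ^ p) * V * ∑' k : ℕ, s ^ k := by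
      rw [← ENNReal.tsum_mul_left]
      congr 1 with k
      ring
    rw [this, ENNReal.tsum_geometric]
    refine ENNReal.mul_lt_top (ENNReal.mul_lt_top ENNReal.ofReal_lt_top hVfin) ?_
    rw [ENNReal.inv_lt_top]
    exact tsub_pos_of_lt hs1
  calc ∫⁻ z in closedBall (0 : E) 1, φ z ≤ ∫⁻ z in {0} ∪ ⋃ k, D k, φ z :=
        lintegral_mono_set hsub
    _ ≤ (∫⁻ z in ({0} : Set E), φ z) + ∫⁻ z in ⋃ k, D k, φ z := lintegral_union_le _ _ _
    _ = ∫⁻ z in ⋃ k, D k, φ z := by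
        rw [setLIntegral_measure_zero _ _ (measure_singleton 0), zero_add]
    _ ≤ ∑' k, ∫⁻ z in D k, φ z := lintegral_iUnion_le _ _
    _ ≤ ∑' k, (ENNReal.ofReal (2 ^ p) * s ^ k * V) := ENNReal.tsum_le_tsum hterm
    _ < ⊤ := hsum

lemma aux_transl (hN : 0 < N) (x : EuclideanSpace ℝ (Fin N)) (p ρ : ℝ) :
    ∫⁻ y in {y : EuclideanSpace ℝ (Fin N) | ‖x - y‖ ≤ ρ}, ENNReal.ofReal (‖x - y‖ ^ (-p))
      = ∫⁻ z in closedBall (0 : EuclideanSpace ℝ (Fin N)) ρ, ENNReal.ofReal (‖z‖ ^ (-p)) := by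
  let E := EuclideanSpace ℝ (Fin N)
  set φ : E → ℝ≥0∞ := fun z => ENNReal.ofReal (‖z‖ ^ (-p)) with hφdef
  have hφ : Measurable φ := by fun_prop
  set ψ : E → ℝ≥0∞ := (closedBall (0 : E) ρ).indicator φ with hψdef
  have hψ : Measurable ψ := hφ.indicator measurableSet_closedBall
  have hSmeas : MeasurableSet {y : E | ‖x - y‖ ≤ ρ} := by
    have : IsClosed {y : E | ‖x - y‖ ≤ ρ} :=
      isClosed_le (by continuity) continuous_const
    exact this.measurableSet
  have hpt : ∀ y : E, ({y : E | ‖x - y‖ ≤ ρ}).indicator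
      (fun y => ENNReal.ofReal (‖x - y‖ ^ (-p))) y = ψ (x - y) := by
    intro y
    have hmem : y ∈ {y : E | ‖x - y‖ ≤ ρ} ↔ x - y ∈ closedBall (0 : E) ρ := by
      simp [mem_closedBall, dist_zero_right]
    by_cases h : y ∈ {y : E | ‖x - y‖ ≤ ρ}
    · rw [Set.indicator_of_mem h, hψdef, Set.indicator_of_mem (hmem.mp h)]
    · rw [Set.indicator_of_notMem h, hψdef,
        Set.indicator_of_notMem (fun hh => h (hmem.mpr hh))]
  calc ∫⁻ y in {y : E | ‖x - y‖ ≤ ρ}, ENNReal.ofReal (‖x - y‖ ^ (-p))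
      = ∫⁻ y, ({y : E | ‖x - y‖ ≤ ρ}).indicator
          (fun y => ENNReal.ofReal (‖x - y‖ ^ (-p))) y := by
        rw [lintegral_indicator hSmeas]
    _ = ∫⁻ y, ψ (x - y) := by simp_rw [hpt]
    _ = ∫⁻ z, ψ z := (Measure.measurePreserving_sub_left volume x).lintegral_comp hψ
    _ = ∫⁻ z in closedBall (0 : E) ρ, φ z := lintegral_indicator measurableSet_closedBall φ

set_option maxHeartbeats 2000000 in
/-- Lemma 3.10 (case `α > 1`): asymptotics of the Riesz potential of a nonnegative
radial `L¹` function with `f(|x|)|x|^N → 0`. -/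
theorem stmt5 (N : ℕ) (hN : 1 ≤ N) (α : ℝ) (hα1 : 1 < α) (hαN : α < N)
    (f : EuclideanSpace ℝ (Fin N) → ℝ)
    (hf : Integrable f) (hfnn : ∀ x, 0 ≤ f x)
    (hrad : ∀ x y : EuclideanSpace ℝ (Fin N), ‖x‖ = ‖y‖ → f x = f y)
    (hdecay : Tendsto (fun x : EuclideanSpace ℝ (Fin N) => f x * ‖x‖ ^ (N : ℝ))
        (comap (fun x : EuclideanSpace ℝ (Fin N) => ‖x‖) atTop) (nhds 0)) :
    Tendsto (fun x : EuclideanSpace ℝ (Fin N) =>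
        ‖x‖ ^ ((N : ℝ) - α) * ∫ y, f y / ‖x - y‖ ^ ((N : ℝ) - α))
      (comap (fun x : EuclideanSpace ℝ (Fin N) => ‖x‖) atTop)
      (nhds (∫ y, f y)) := by
  clear hrad
  haveI : Nonempty (Fin N) := ⟨⟨0, hN⟩⟩
  set l := comap (fun x : EuclideanSpace ℝ (Fin N) => ‖x‖) atTop with hl
  set p : ℝ := (N : ℝ) - α with hpdef
  have hα0 : 0 < α := lt_trans one_pos hα1
  have hp0 : 0 < p := by rw [hpdef]; linarith
  have hpN : p < (N : ℝ) := by rw [hpdef]; linarith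
  -- the integrand with the factor pulled inside
  set g : EuclideanSpace ℝ (Fin N) → EuclideanSpace ℝ (Fin N) → ℝ :=
    fun x y => f y * (‖x‖ ^ p / ‖x - y‖ ^ p) with hgdef
  have hgnn : ∀ x y, 0 ≤ g x y :=
    fun x y => mul_nonneg (hfnn y) (div_nonneg (Real.rpow_nonneg (norm_nonneg _) _)
      (Real.rpow_nonneg (norm_nonneg _) _))
  have hmg : ∀ x, AEStronglyMeasurable (g x) volume := by
    intro x
    apply hf.1.mul
    apply Measurable.aestronglyMeasurable
    fun_prop
  have key0 : ∀ x : EuclideanSpace ℝ (Fin N),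
      ‖x‖ ^ p * ∫ y, f y / ‖x - y‖ ^ p = ∫ y, g x y := by
    intro x
    rw [← integral_const_mul]
    congr 1
    funext y
    rw [hgdef]
    ring
  -- the "near" sets
  set S : EuclideanSpace ℝ (Fin N) → Set (EuclideanSpace ℝ (Fin N)) :=
    fun x => {y | ‖x - y‖ ≤ ‖x‖ / 2} with hSdef
  have hSmeas : ∀ x, MeasurableSet (S x) := by
    intro x
    exact (isClosed_le (by continuity) continuous_const).measurableSet
  have hnorm_atTop : Tendsto (fun x : EuclideanSpace ℝ (Fin N)
      => ‖x‖) l atTop := tendsto_comap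
  -- extraction of the decay hypothesis
  have hdec : ∀ δ : ℝ, 0 < δ → ∃ M : ℝ, ∀ y : EuclideanSpace ℝ (Fin N),
      M ≤ ‖y‖ → f y * ‖y‖ ^ (N : ℝ) < δ := by
    intro δ hδ
    have h1 : ∀ᶠ x in l, f x * ‖x‖ ^ (N : ℝ) < δ := hdecay.eventually_lt_const hδ
    rw [hl, eventually_comap] at h1
    rw [eventually_atTop] at h1
    obtain ⟨M, hM⟩ := h1
    exact ⟨M, fun y hy => hM ‖y‖ hy y rfl⟩
  set C₁ : ℝ≥0∞ := ∫⁻ z in closedBall (0 : EuclideanSpace ℝ (Fin N)) 1,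
    ENNReal.ofReal (‖z‖ ^ (-p)) with hC₁def
  have hC₁fin : C₁ < ⊤ := aux_fin hN hp0 hpN
  -- core estimate for the near piece
  have hcore : ∀ δ : ℝ, 0 < δ → ∀ M : ℝ,
      (∀ y : EuclideanSpace ℝ (Fin N), M ≤ ‖y‖ → f y * ‖y‖ ^ (N : ℝ) < δ) →
      ∀ x : EuclideanSpace ℝ (Fin N), 1 ≤ ‖x‖ → 2 * M ≤ ‖x‖ →
      IntegrableOn (g x) (S x) ∧ ∫ y in S x, g x y ≤ δ * 2 ^ p * C₁.toReal := by
    intro δ hδ M hM x hx1 hx2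
    set R := ‖x‖ with hR
    have hR0 : 0 < R := lt_of_lt_of_le one_pos hx1
    have hRhalf : 0 < R / 2 := by linarith
    set c₂ : ℝ := δ * 2 ^ (N : ℝ) * R ^ p / R ^ (N : ℝ) with hc₂def
    have hc₂nn : 0 ≤ c₂ := by positivity
    -- pointwise bound on S x
    have hpt : ∀ y ∈ S x, g x y ≤ c₂ * ‖x - y‖ ^ (-p) := by
      intro y hy
      have hy' : ‖x - y‖ ≤ R / 2 := hy
      have hy2 : R / 2 ≤ ‖y‖ := by
        have h3 : ‖x‖ ≤ ‖x - y‖ + ‖y‖ := by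
          calc ‖x‖ = ‖(x - y) + y‖ := by rw [sub_add_cancel]
            _ ≤ ‖x - y‖ + ‖y‖ := norm_add_le _ _
        linarith
      have hypos : 0 < ‖y‖ := lt_of_lt_of_le hRhalf hy2
      have hfy : f y ≤ δ * 2 ^ (N : ℝ) / R ^ (N : ℝ) := by
        have h1 : f y * ‖y‖ ^ (N : ℝ) < δ := hM y (by linarith)
        have h2 : (R / 2) ^ (N : ℝ) ≤ ‖y‖ ^ (N : ℝ) :=
          Real.rpow_le_rpow hRhalf.le hy2 (Nat.cast_nonneg N)
        have h3 : 0 < ‖y‖ ^ (N : ℝ) := Real.rpow_pos_of_pos hypos _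
        have h4 : f y ≤ δ / ‖y‖ ^ (N : ℝ) := by
          rw [le_div_iff₀ h3]; exact h1.le
        have h5 : δ / ‖y‖ ^ (N : ℝ) ≤ δ / (R / 2) ^ (N : ℝ) :=
          div_le_div_of_nonneg_left hδ.le (Real.rpow_pos_of_pos hRhalf _) h2
        have h6 : δ / (R / 2) ^ (N : ℝ) = δ * 2 ^ (N : ℝ) / R ^ (N : ℝ) := by
          rw [Real.div_rpow hR0.le (by norm_num : (0:ℝ) ≤ 2), div_div_eq_mul_div]
        linarith
      by_cases hxy : ‖x - y‖ = 0
      · rw [hgdef]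
        simp only [hxy, Real.zero_rpow hp0.ne', Real.zero_rpow (neg_ne_zero.mpr hp0.ne'),
          div_zero, mul_zero]
        exact le_refl 0
      · have hxy0 : 0 < ‖x - y‖ := lt_of_le_of_ne (norm_nonneg _) (Ne.symm hxy)
        have hinv : ‖x - y‖ ^ (-p) = (‖x - y‖ ^ p)⁻¹ := Real.rpow_neg (norm_nonneg _) p
        have hstep : g x y ≤ (δ * 2 ^ (N : ℝ) / R ^ (N : ℝ)) * (R ^ p / ‖x - y‖ ^ p) := by
          rw [hgdef]
          exact mul_le_mul_of_nonneg_right hfy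
            (div_nonneg (Real.rpow_nonneg (norm_nonneg _) _)
              (Real.rpow_nonneg (norm_nonneg _) _))
        calc g x y ≤ (δ * 2 ^ (N : ℝ) / R ^ (N : ℝ)) * (R ^ p / ‖x - y‖ ^ p) := hstep
          _ = c₂ * ‖x - y‖ ^ (-p) := by
            rw [hinv, hc₂def]
            ring
    -- lintegral bound
    have hlint : ∫⁻ y in S x, ENNReal.ofReal (g x y)
        ≤ ENNReal.ofReal (δ * 2 ^ p) * C₁ := by
      have hmono : ∫⁻ y in S x, ENNReal.ofReal (g x y)
          ≤ ∫⁻ y in S x, ENNReal.ofReal (c₂ * ‖x - y‖ ^ (-p)) := by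
        refine setLIntegral_mono (by fun_prop) ?_
        exact fun y hy => ENNReal.ofReal_le_ofReal (hpt y hy)
      have htr : ∫⁻ y in S x, ENNReal.ofReal (c₂ * ‖x - y‖ ^ (-p))
          = ENNReal.ofReal c₂ * (ENNReal.ofReal ((R / 2) ^ ((N : ℝ) - p)) * C₁) := by
        have e1 : ∀ y : EuclideanSpace ℝ (Fin N), ENNReal.ofReal (c₂ * ‖x - y‖ ^ (-p))
            = ENNReal.ofReal c₂ * ENNReal.ofReal (‖x - y‖ ^ (-p)) :=
          fun y => ENNReal.ofReal_mul hc₂nn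
        simp_rw [e1]
        rw [lintegral_const_mul _ (by fun_prop)]
        rw [hSdef]
        rw [aux_transl hN x p (R / 2), aux_scaling hN hp0 hRhalf]
      have hcc : c₂ * (R / 2) ^ ((N : ℝ) - p) = δ * 2 ^ p := by
        have e1 : R ^ p * R ^ ((N : ℝ) - p) = R ^ (N : ℝ) := by
          rw [← Real.rpow_add hR0]; congr 1; ring
        have e2 : (2 : ℝ) ^ (N : ℝ) / 2 ^ ((N : ℝ) - p) = 2 ^ p := by
          rw [Real.rpow_sub (by norm_num : (0:ℝ) < 2), div_div_eq_mul_div,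
            mul_comm ((2:ℝ) ^ (N : ℝ)) ((2:ℝ) ^ p), mul_div_assoc,
            div_self (ne_of_gt (Real.rpow_pos_of_pos two_pos _)), mul_one]
        calc c₂ * (R / 2) ^ ((N : ℝ) - p)
            = c₂ * (R ^ ((N : ℝ) - p) / 2 ^ ((N : ℝ) - p)) := by
              rw [Real.div_rpow hR0.le (by norm_num : (0:ℝ) ≤ 2)]
          _ = δ * ((2 : ℝ) ^ (N : ℝ) / 2 ^ ((N : ℝ) - p))
              * ((R ^ p * R ^ ((N : ℝ) - p)) / R ^ (N : ℝ)) := by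
              rw [hc₂def]; ring
          _ = δ * 2 ^ p * (R ^ (N : ℝ) / R ^ (N : ℝ)) := by rw [e1, e2]
          _ = δ * 2 ^ p := by
              rw [div_self (ne_of_gt (Real.rpow_pos_of_pos hR0 _)), mul_one]
      calc ∫⁻ y in S x, ENNReal.ofReal (g x y)
          ≤ ENNReal.ofReal c₂ * (ENNReal.ofReal ((R / 2) ^ ((N : ℝ) - p)) * C₁) :=
            hmono.trans (le_of_eq htr)
        _ = ENNReal.ofReal (c₂ * (R / 2) ^ ((N : ℝ) - p)) * C₁ := by
            rw [← mul_assoc, ← ENNReal.ofReal_mul hc₂nn]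
        _ = ENNReal.ofReal (δ * 2 ^ p) * C₁ := by rw [hcc]
    -- integrability
    have hfin : IntegrableOn (g x) (S x) := by
      constructor
      · exact (hmg x).restrict
      · rw [hasFiniteIntegral_iff_norm]
        have e1 : ∀ y, ENNReal.ofReal ‖g x y‖ = ENNReal.ofReal (g x y) := by
          intro y; rw [Real.norm_eq_abs, abs_of_nonneg (hgnn x y)]
        simp_rw [e1]
        exact lt_of_le_of_lt hlint
          (ENNReal.mul_lt_top ENNReal.ofReal_lt_top hC₁fin)
    refine ⟨hfin, ?_⟩
    have heq : ∫ y in S x, g x y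
        = (∫⁻ y in S x, ENNReal.ofReal (g x y)).toReal := by
      rw [integral_eq_lintegral_of_nonneg_ae (ae_of_all _ (fun y => hgnn x y))
        (hmg x).restrict]
    rw [heq]
    calc (∫⁻ y in S x, ENNReal.ofReal (g x y)).toReal
        ≤ (ENNReal.ofReal (δ * 2 ^ p) * C₁).toReal :=
          ENNReal.toReal_mono (ENNReal.mul_ne_top ENNReal.ofReal_ne_top hC₁fin.ne) hlint
      _ = δ * 2 ^ p * C₁.toReal := by
          rw [ENNReal.toReal_mul, ENNReal.toReal_ofReal (by positivity)]
  -- far-piece pointwise bound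
  have hfarpt : ∀ x : EuclideanSpace ℝ (Fin N), 1 ≤ ‖x‖ →
      ∀ y ∉ S x, g x y ≤ 2 ^ p * f y := by
    intro x hx1 y hy
    have hR0 : (0:ℝ) < ‖x‖ := lt_of_lt_of_le one_pos hx1
    have hy' : ‖x‖ / 2 < ‖x - y‖ := by
      rw [hSdef] at hy; simpa [not_le] using hy
    have h1 : (‖x‖ / 2) ^ p ≤ ‖x - y‖ ^ p :=
      Real.rpow_le_rpow (by linarith) hy'.le hp0.le
    have h2 : (0:ℝ) < (‖x‖ / 2) ^ p := Real.rpow_pos_of_pos (by linarith) _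
    have h3 : ‖x‖ ^ p / ‖x - y‖ ^ p ≤ ‖x‖ ^ p / (‖x‖ / 2) ^ p :=
      div_le_div_of_nonneg_left (Real.rpow_nonneg (norm_nonneg _) _) h2 h1
    have h4 : ‖x‖ ^ p / (‖x‖ / 2) ^ p = 2 ^ p := by
      rw [Real.div_rpow hR0.le (by norm_num : (0:ℝ) ≤ 2), div_div_eq_mul_div,
        mul_comm (‖x‖ ^ p) ((2:ℝ) ^ p), mul_div_assoc,
        div_self (ne_of_gt (Real.rpow_pos_of_pos hR0 _)), mul_one]
    calc g x y ≤ f y * (‖x‖ ^ p / (‖x‖ / 2) ^ p) :=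
          mul_le_mul_of_nonneg_left (h3) (hfnn y)
      _ = 2 ^ p * f y := by rw [h4]; ring
  -- far piece integrable
  have hfarint : ∀ x : EuclideanSpace ℝ (Fin N), 1 ≤ ‖x‖ →
      IntegrableOn (g x) (S x)ᶜ := by
    intro x hx1
    refine Integrable.mono' ((hf.const_mul (2 ^ p)).restrict) (hmg x).restrict ?_
    rw [ae_restrict_iff' (hSmeas x).compl]
    refine ae_of_all _ (fun y hy => ?_)
    rw [Real.norm_eq_abs, abs_of_nonneg (hgnn x y)]
    exact hfarpt x hx1 y hy
  -- splitting
  have hsplit : ∀ᶠ x in l, ‖x‖ ^ p * ∫ y, f y / ‖x - y‖ ^ p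
      = (∫ y in S x, g x y) + ∫ y in (S x)ᶜ, g x y := by
    obtain ⟨M₁, hM₁⟩ := hdec 1 one_pos
    filter_upwards [hnorm_atTop.eventually_ge_atTop 1,
      hnorm_atTop.eventually_ge_atTop (2 * M₁)] with x hx1 hx2
    have hint : Integrable (g x) := by
      rw [← integrableOn_univ, ← Set.union_compl_self (S x)]
      exact ((hcore 1 one_pos M₁ hM₁ x hx1 hx2).1).union (hfarint x hx1)
    rw [key0 x, ← integral_add_compl (hSmeas x) hint]
  -- near piece tends to zero
  have hB : Tendsto (fun x => ∫ y in S x, g x y) l (𝓝 0) := by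
    rw [NormedAddCommGroup.tendsto_nhds_zero]
    intro ε hε
    set c : ℝ := 2 ^ p * C₁.toReal + 1 with hcdef
    have hc0 : 0 < c := by positivity
    set δ : ℝ := ε / c with hδdef
    have hδ0 : 0 < δ := div_pos hε hc0
    obtain ⟨M, hM⟩ := hdec δ hδ0
    filter_upwards [hnorm_atTop.eventually_ge_atTop 1,
      hnorm_atTop.eventually_ge_atTop (2 * M)] with x hx1 hx2
    obtain ⟨hfin, hle⟩ := hcore δ hδ0 M hM x hx1 hx2
    have hnn : 0 ≤ ∫ y in S x, g x y :=
      setIntegral_nonneg (hSmeas x) (fun y _ => hgnn x y)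
    rw [Real.norm_eq_abs, abs_of_nonneg hnn]
    have h2 : δ * 2 ^ p * C₁.toReal < ε := by
      have h3 : δ * c = ε := div_mul_cancel₀ ε hc0.ne'
      have h4 : 2 ^ p * C₁.toReal < c := by rw [hcdef]; linarith
      nlinarith [Real.rpow_nonneg (by norm_num : (0:ℝ) ≤ 2) p,
        ENNReal.toReal_nonneg (a := C₁)]
    exact lt_of_le_of_lt hle h2
  -- far piece tends to the integral
  have hA : Tendsto (fun x => ∫ y in (S x)ᶜ, g x y) l (𝓝 (∫ y, f y)) := by
    have hrw : ∀ x : EuclideanSpace ℝ (Fin N),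
        ∫ y in (S x)ᶜ, g x y = ∫ y, ((S x)ᶜ).indicator (g x) y := by
      intro x; rw [integral_indicator (hSmeas x).compl]
    simp_rw [hrw]
    refine tendsto_integral_filter_of_dominated_convergence
      (fun y => 2 ^ p * f y) ?_ ?_ (hf.const_mul _) ?_
    · exact Eventually.of_forall (fun x => (hmg x).indicator (hSmeas x).compl)
    · filter_upwards [hnorm_atTop.eventually_ge_atTop 1] with x hx1
      refine ae_of_all _ (fun y => ?_)
      by_cases hy : y ∈ (S x)ᶜ
      · rw [Set.indicator_of_mem hy, Real.norm_eq_abs, abs_of_nonneg (hgnn x y)]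
        exact hfarpt x hx1 y hy
      · rw [Set.indicator_of_notMem hy]
        simp only [norm_zero]
        exact mul_nonneg (Real.rpow_nonneg (by norm_num) p) (hfnn y)
    · refine ae_of_all _ (fun y => ?_)
      -- pointwise limit
      have hev : ∀ᶠ x in l, ((S x)ᶜ).indicator (g x) y
          = f y * (‖x‖ ^ p / ‖x - y‖ ^ p) := by
        filter_upwards [hnorm_atTop.eventually_ge_atTop (2 * ‖y‖ + 1)] with x hx
        have h1 : ‖x‖ / 2 < ‖x - y‖ := by
          have h2 : ‖x‖ - ‖y‖ ≤ ‖x - y‖ := by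
            have := norm_sub_norm_le x y; linarith [abs_le.mp (abs_norm_sub_norm_le x y)]
          linarith
        have hy' : y ∈ (S x)ᶜ := by
          rw [hSdef]; simp only [Set.mem_compl_iff, Set.mem_setOf_eq, not_le]; exact h1
        rw [Set.indicator_of_mem hy', hgdef]
      have hlim : Tendsto (fun x : EuclideanSpace ℝ (Fin N)
          => f y * (‖x‖ ^ p / ‖x - y‖ ^ p)) l (𝓝 (f y)) := by
        have hratio : Tendsto (fun x : EuclideanSpace ℝ (Fin N)
            => ‖x‖ / ‖x - y‖) l (𝓝 1) := by
          have hlow : Tendsto (fun x : EuclideanSpace ℝ (Fin N)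
              => ‖x‖ / (‖x‖ + (‖y‖ + 1))) l (𝓝 1) :=
            (tendsto_div_add_const (‖y‖ + 1)).comp hnorm_atTop
          have hup : Tendsto (fun x : EuclideanSpace ℝ (Fin N)
              => ‖x‖ / (‖x‖ - (‖y‖ + 1))) l (𝓝 1) :=
            (tendsto_div_sub_const (‖y‖ + 1)).comp hnorm_atTop
          refine tendsto_of_tendsto_of_tendsto_of_le_of_le' hlow hup ?_ ?_
          · filter_upwards [hnorm_atTop.eventually_ge_atTop (‖y‖ + 2)] with x hx
            have h1 : 0 < ‖x - y‖ := by
              have := norm_sub_norm_le x y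
              have h2 := abs_le.mp (abs_norm_sub_norm_le x y)
              linarith [h2.1]
            have h2 : ‖x - y‖ ≤ ‖x‖ + (‖y‖ + 1) := by
              have := norm_sub_le x y; linarith
            exact div_le_div_of_nonneg_left (norm_nonneg x) h1 h2
          · filter_upwards [hnorm_atTop.eventually_ge_atTop (‖y‖ + 2)] with x hx
            have h2 := abs_le.mp (abs_norm_sub_norm_le x y)
            have h1 : 0 < ‖x‖ - (‖y‖ + 1) := by linarith
            have h3 : ‖x‖ - (‖y‖ + 1) ≤ ‖x - y‖ := by linarith [h2.1]
            exact div_le_div_of_nonneg_left (norm_nonneg x) h1 h3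
        have hrpow : Tendsto (fun x : EuclideanSpace ℝ (Fin N)
            => (‖x‖ / ‖x - y‖) ^ p) l (𝓝 1) := by
          have := hratio.rpow_const (p := p) (Or.inl one_ne_zero)
          rwa [Real.one_rpow] at this
        have := hrpow.const_mul (f y)
        rw [mul_one] at this
        exact this.congr
          (fun x => by rw [Real.div_rpow (norm_nonneg _) (norm_nonneg _)])
      exact hlim.congr' (by filter_upwards [hev] with x hx using hx.symm)
  have hsum : Tendsto (fun x => (∫ y in S x, g x y) + ∫ y in (S x)ᶜ, g x y)
      l (𝓝 (0 + ∫ y, f y)) := hB.add hA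
  rw [zero_add] at hsum
  exact hsum.congr' (by filter_upwards [hsplit] with x hx using hx.symm)
end

section
/- Let N ≥ 1, let m' > N/2 and let m ∈ (0, m']. Then there exist constants c, C > 0 and R > 0 such that for all x ∈ ℝᴺ with |x| ≥ R, c·|x|^{−2m} ≤ ∫_{ℝᴺ} (1+|y−x|²)^{−m} (1+|y|²)^{−m'} dy ≤ C·|x|^{−2m}. -/
open MeasureTheory

set_option maxHeartbeats 1000000

/-- Lemma 3.11: for `m' > N/2` and `0 < m ≤ m'`, the integral
`∫ (1+|y-x|²)^{-m} (1+|y|²)^{-m'} dy` behaves like `|x|^{-2m}` for large `|x|`. -/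
theorem stmt6 (N : ℕ) (hN : 1 ≤ N) (m m' : ℝ) (hm' : (N : ℝ) / 2 < m')
    (hm0 : 0 < m) (hmm' : m ≤ m') :
    ∃ c C R : ℝ, 0 < c ∧ 0 < C ∧ 0 < R ∧
      ∀ x : EuclideanSpace ℝ (Fin N), R ≤ ‖x‖ →
        c * ‖x‖ ^ (-(2 * m)) ≤
          (∫ y : EuclideanSpace ℝ (Fin N),
            (1 + ‖y - x‖ ^ 2) ^ (-m) * (1 + ‖y‖ ^ 2) ^ (-m')) ∧
        (∫ y : EuclideanSpace ℝ (Fin N),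
            (1 + ‖y - x‖ ^ 2) ^ (-m) * (1 + ‖y‖ ^ 2) ^ (-m')) ≤
          C * ‖x‖ ^ (-(2 * m)) := by
  have hm'0 : 0 < m' := lt_of_le_of_lt (by positivity) hm'
  set E := EuclideanSpace ℝ (Fin N) with hE
  -- integrability of the weight
  have hdim : (Module.finrank ℝ E : ℝ) < 2 * m' := by
    rw [finrank_euclideanSpace_fin]; linarith
  have hK : Integrable (fun y : E => (1 + ‖y‖ ^ 2) ^ (-m')) := by
    have := integrable_rpow_neg_one_add_norm_sq (E := E) (μ := volume) hdim
    simpa [show -(2 * m') / 2 = -m' by ring] using this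
  set K := ∫ y : E, (1 + ‖y‖ ^ 2) ^ (-m') with hKdef
  have hKnn : 0 ≤ K := integral_nonneg fun y => Real.rpow_nonneg (by positivity) _
  -- basic positivity facts used repeatedly
  have hbase : ∀ y : E, (0:ℝ) < 1 + ‖y‖ ^ 2 := fun y => by positivity
  -- integrability of the integrand for each x
  have hint : ∀ x : E, Integrable (fun y : E =>
      (1 + ‖y - x‖ ^ 2) ^ (-m) * (1 + ‖y‖ ^ 2) ^ (-m')) := by
    intro x
    refine hK.mono' (Measurable.aestronglyMeasurable (by fun_prop)) ?_
    filter_upwards with y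
    have h1 : (1 + ‖y - x‖ ^ 2) ^ (-m) ≤ 1 :=
      Real.rpow_le_one_of_one_le_of_nonpos (le_add_of_nonneg_right (by positivity)) (by linarith)
    have h2 : (0:ℝ) ≤ (1 + ‖y - x‖ ^ 2) ^ (-m) := Real.rpow_nonneg (by positivity) _
    have h3 : (0:ℝ) ≤ (1 + ‖y‖ ^ 2) ^ (-m') := Real.rpow_nonneg (by positivity) _
    rw [Real.norm_eq_abs, abs_of_nonneg (by positivity)]
    calc (1 + ‖y - x‖ ^ 2) ^ (-m) * (1 + ‖y‖ ^ 2) ^ (-m')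
        ≤ 1 * (1 + ‖y‖ ^ 2) ^ (-m') := by gcongr
      _ = (1 + ‖y‖ ^ 2) ^ (-m') := one_mul _
  -- translation invariance
  have htrans : ∀ x : E, (∫ y : E, (1 + ‖y - x‖ ^ 2) ^ (-m')) = K := by
    intro x
    rw [hKdef]
    exact integral_sub_right_eq_self (fun y : E => (1 + ‖y‖ ^ 2) ^ (-m')) x
  have hKt : ∀ x : E, Integrable (fun y : E => (1 + ‖y - x‖ ^ 2) ^ (-m')) := by
    intro x
    have := hK.comp_sub_right x
    simpa using this
  -- ball volume
  set V := (volume (Metric.ball (0:E) 1)).toReal with hV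
  have hVpos : 0 < V := by
    rw [hV]
    refine ENNReal.toReal_pos (ne_of_gt (Metric.measure_ball_pos _ _ one_pos)) ?_
    exact (measure_ball_lt_top).ne
  refine ⟨V * ((2:ℝ) ^ (-m') * (5:ℝ) ^ (-m)), (2 * K + 1) * (4:ℝ) ^ m, 1,
    by positivity, by positivity, one_pos, ?_⟩
  intro x hx
  have hxpos : (0:ℝ) < ‖x‖ := lt_of_lt_of_le one_pos hx
  have hxnn : (0:ℝ) ≤ ‖x‖ := hxpos.le
  -- |x|^(-(2m)) = (‖x‖^2)^(-m)
  have hxsq : (‖x‖ ^ 2 : ℝ) ^ (-m) = ‖x‖ ^ (-(2 * m)) := by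
    rw [← Real.rpow_natCast ‖x‖ 2, ← Real.rpow_mul hxnn]
    norm_num
  constructor
  · -- lower bound
    have hnn : 0 ≤ᵐ[volume] fun y : E =>
        (1 + ‖y - x‖ ^ 2) ^ (-m) * (1 + ‖y‖ ^ 2) ^ (-m') := by
      filter_upwards with y
      positivity
    have step1 : (∫ y in Metric.ball (0:E) 1,
          (1 + ‖y - x‖ ^ 2) ^ (-m) * (1 + ‖y‖ ^ 2) ^ (-m'))
        ≤ ∫ y : E, (1 + ‖y - x‖ ^ 2) ^ (-m) * (1 + ‖y‖ ^ 2) ^ (-m') :=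
      setIntegral_le_integral (hint x) hnn
    have step2 : ((2:ℝ) ^ (-m') * ((5:ℝ) ^ (-m) * ‖x‖ ^ (-(2 * m)))) * V
        ≤ ∫ y in Metric.ball (0:E) 1,
          (1 + ‖y - x‖ ^ 2) ^ (-m) * (1 + ‖y‖ ^ 2) ^ (-m') := by
      refine setIntegral_ge_of_const_le_real Metric.isOpen_ball.measurableSet
        (measure_ball_lt_top).ne ?_ ((hint x).integrableOn)
      intro y hy
      rw [Metric.mem_ball, dist_zero_right] at hy
      have h1 : 1 + ‖y‖ ^ 2 ≤ 2 := by nlinarith [norm_nonneg y]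
      have h2 : ‖y - x‖ ≤ 2 * ‖x‖ := by
        calc ‖y - x‖ ≤ ‖y‖ + ‖x‖ := norm_sub_le y x
          _ ≤ 2 * ‖x‖ := by linarith
      have h3 : 1 + ‖y - x‖ ^ 2 ≤ 5 * ‖x‖ ^ 2 := by nlinarith [norm_nonneg (y - x)]
      have hA : (5 * ‖x‖ ^ 2 : ℝ) ^ (-m) ≤ (1 + ‖y - x‖ ^ 2) ^ (-m) :=
        Real.rpow_le_rpow_of_nonpos (by positivity) h3 (by linarith)
      have hB : (2:ℝ) ^ (-m') ≤ (1 + ‖y‖ ^ 2) ^ (-m') :=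
        Real.rpow_le_rpow_of_nonpos (by positivity) h1 (by linarith)
      have hmul : (5 * ‖x‖ ^ 2 : ℝ) ^ (-m) = (5:ℝ) ^ (-m) * ‖x‖ ^ (-(2 * m)) := by
        rw [Real.mul_rpow (by norm_num) (by positivity), hxsq]
      calc (2:ℝ) ^ (-m') * ((5:ℝ) ^ (-m) * ‖x‖ ^ (-(2 * m)))
          = (5 * ‖x‖ ^ 2 : ℝ) ^ (-m) * (2:ℝ) ^ (-m') := by rw [hmul]; ring
        _ ≤ (1 + ‖y - x‖ ^ 2) ^ (-m) * (1 + ‖y‖ ^ 2) ^ (-m') :=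
            mul_le_mul hA hB (Real.rpow_nonneg (by norm_num) _)
              (Real.rpow_nonneg (by positivity) _)
    calc V * ((2:ℝ) ^ (-m') * (5:ℝ) ^ (-m)) * ‖x‖ ^ (-(2 * m))
        = ((2:ℝ) ^ (-m') * ((5:ℝ) ^ (-m) * ‖x‖ ^ (-(2 * m)))) * V := by ring
      _ ≤ _ := le_trans step2 step1
  · -- upper bound
    set D : ℝ := 1 + ‖x‖ ^ 2 / 4 with hD
    have hDpos : (0:ℝ) < D := by positivity
    -- pointwise bound
    have hpt : ∀ y : E, (1 + ‖y - x‖ ^ 2) ^ (-m) * (1 + ‖y‖ ^ 2) ^ (-m')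
        ≤ D ^ (-m) * ((1 + ‖y‖ ^ 2) ^ (-m') + (1 + ‖y - x‖ ^ 2) ^ (-m')) := by
      intro y
      set A : ℝ := 1 + ‖y - x‖ ^ 2 with hA
      set B : ℝ := 1 + ‖y‖ ^ 2 with hB
      have hApos : (0:ℝ) < A := by positivity
      have hBpos : (0:ℝ) < B := by positivity
      rcases le_or_gt (‖x‖ / 2) ‖y - x‖ with hcase | hcase
      · have hDA : D ≤ A := by
          rw [hD, hA]
          nlinarith [norm_nonneg (y - x)]
        have h1 : A ^ (-m) ≤ D ^ (-m) :=
          Real.rpow_le_rpow_of_nonpos hDpos hDA (by linarith)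
        have h2 : (0:ℝ) ≤ B ^ (-m') := Real.rpow_nonneg hBpos.le _
        have h3 : (0:ℝ) ≤ A ^ (-m') := Real.rpow_nonneg hApos.le _
        have h5 : A ^ (-m) * B ^ (-m') ≤ D ^ (-m) * B ^ (-m') :=
          mul_le_mul_of_nonneg_right h1 h2
        have h6 : (0:ℝ) ≤ D ^ (-m) * A ^ (-m') :=
          mul_nonneg (Real.rpow_nonneg hDpos.le _) h3
        linarith
      · have hyx : ‖x‖ / 2 ≤ ‖y‖ := by
          have h := norm_sub_le y (y - x)
          rw [sub_sub_cancel] at h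
          linarith
        have hAD : A ≤ D := by
          rw [hD, hA]
          nlinarith [norm_nonneg (y - x)]
        have hDB : D ≤ B := by
          rw [hD, hB]
          nlinarith [norm_nonneg y]
        -- A^(-m) B^(-m') ≤ A^(-m) D^(-m') ≤ D^(-m) A^(-m')
        have h1 : B ^ (-m') ≤ D ^ (-m') :=
          Real.rpow_le_rpow_of_nonpos hDpos hDB (by linarith)
        have h2 : D ^ (-(m' - m)) ≤ A ^ (-(m' - m)) :=
          Real.rpow_le_rpow_of_nonpos hApos hAD (by linarith)
        have key : A ^ (-m) * B ^ (-m') ≤ D ^ (-m) * A ^ (-m') := by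
          calc A ^ (-m) * B ^ (-m') ≤ A ^ (-m) * D ^ (-m') := by gcongr
            _ = A ^ (-m) * (D ^ (-m) * D ^ (-(m' - m))) := by
                rw [← Real.rpow_add hDpos]; ring_nf
            _ ≤ A ^ (-m) * (D ^ (-m) * A ^ (-(m' - m))) := by gcongr
            _ = D ^ (-m) * (A ^ (-m) * A ^ (-(m' - m))) := by ring
            _ = D ^ (-m) * A ^ (-m') := by
                rw [← Real.rpow_add hApos]; ring_nf
        have h3 : (0:ℝ) ≤ B ^ (-m') := Real.rpow_nonneg hBpos.le _
        have h4 : (0:ℝ) ≤ D ^ (-m) := Real.rpow_nonneg hDpos.le _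
        have h5 : (0:ℝ) ≤ D ^ (-m) * B ^ (-m') := mul_nonneg h4 h3
        linarith
    have hRHSint : Integrable (fun y : E =>
        D ^ (-m) * ((1 + ‖y‖ ^ 2) ^ (-m') + (1 + ‖y - x‖ ^ 2) ^ (-m'))) :=
      (hK.add (hKt x)).const_mul _
    have step1 : (∫ y : E, (1 + ‖y - x‖ ^ 2) ^ (-m) * (1 + ‖y‖ ^ 2) ^ (-m'))
        ≤ ∫ y : E, D ^ (-m) * ((1 + ‖y‖ ^ 2) ^ (-m') + (1 + ‖y - x‖ ^ 2) ^ (-m')) :=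
      integral_mono (hint x) hRHSint hpt
    have step2 : (∫ y : E, D ^ (-m) *
          ((1 + ‖y‖ ^ 2) ^ (-m') + (1 + ‖y - x‖ ^ 2) ^ (-m'))) = D ^ (-m) * (2 * K) := by
      rw [integral_const_mul, integral_add hK (hKt x), htrans x, ← hKdef]
      ring
    have hDbound : D ^ (-m) ≤ (4:ℝ) ^ m * ‖x‖ ^ (-(2 * m)) := by
      have h1 : (‖x‖ ^ 2 / 4 : ℝ) ≤ D := by rw [hD]; linarith
      have h2 : D ^ (-m) ≤ (‖x‖ ^ 2 / 4 : ℝ) ^ (-m) :=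
        Real.rpow_le_rpow_of_nonpos (by positivity) h1 (by linarith)
      have h3 : (‖x‖ ^ 2 / 4 : ℝ) ^ (-m) = (4:ℝ) ^ m * ‖x‖ ^ (-(2 * m)) := by
        have h4 : (0:ℝ) < (4:ℝ) ^ m := Real.rpow_pos_of_pos (by norm_num) m
        rw [Real.div_rpow (by positivity) (by norm_num : (0:ℝ) ≤ 4), hxsq,
          Real.rpow_neg (by norm_num : (0:ℝ) ≤ 4)]
        field_simp
      rw [h3] at h2
      exact h2
    calc (∫ y : E, (1 + ‖y - x‖ ^ 2) ^ (-m) * (1 + ‖y‖ ^ 2) ^ (-m'))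
        ≤ D ^ (-m) * (2 * K) := by rw [← step2]; exact step1
      _ ≤ ((4:ℝ) ^ m * ‖x‖ ^ (-(2 * m))) * (2 * K) := by
          have : (0:ℝ) ≤ 2 * K := by linarith
          exact mul_le_mul_of_nonneg_right hDbound this
      _ ≤ (2 * K + 1) * (4:ℝ) ^ m * ‖x‖ ^ (-(2 * m)) := by
          have h4 : (0:ℝ) < (4:ℝ) ^ m := Real.rpow_pos_of_pos (by norm_num) m
          have hx2 : (0:ℝ) ≤ ‖x‖ ^ (-(2 * m)) := Real.rpow_nonneg hxnn _
          nlinarith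
end

section
/- Let N ≥ 3, L₀ > 0, and suppose u : ℝᴺ → (0,∞) is a C² radial, radially nonincreasing function satisfying −Δu + (κ²/2)·u ≤ 0 for all |x| ≥ R₀ := L₀/κ, where κ > 0, with u(R₀) ≤ M. If L₀ ≥ 2(N−1), then u(x) ≤ M·e^{L₀/2}·e^{−κ|x|/2} for all |x| ≥ R₀. -/
open MeasureTheory

section Aux

lemma line_derivs {N : ℕ} (u : EuclideanSpace ℝ (Fin N) → ℝ) (hu : ContDiff ℝ 2 u)
    (a v : EuclideanSpace ℝ (Fin N)) (t : ℝ) :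
    HasDerivAt (fun s => u (a + s • v)) (fderiv ℝ u (a + t • v) v) t ∧
    HasDerivAt (fun s => fderiv ℝ u (a + s • v) v)
      (fderiv ℝ (fderiv ℝ u) (a + t • v) v v) t := by
  have hl : ∀ s : ℝ, HasDerivAt (fun s : ℝ => a + s • v) v s := by
    intro s
    simpa using ((hasDerivAt_id s).smul_const v).const_add a
  constructor
  · exact ((hu.differentiable (by norm_num) (a + t • v)).hasFDerivAt).comp_hasDerivAt t (hl t)
  · have h2 : ContDiff ℝ 1 (fderiv ℝ u) := hu.fderiv_right (by norm_num)
    have hF : HasFDerivAt (fun x => fderiv ℝ u x v)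
        ((ContinuousLinearMap.apply ℝ ℝ v).comp (fderiv ℝ (fderiv ℝ u) (a + t • v)))
        (a + t • v) :=
      (ContinuousLinearMap.apply ℝ ℝ v).hasFDerivAt.comp _
        ((h2.differentiable (by norm_num) (a + t • v)).hasFDerivAt)
    exact hF.comp_hasDerivAt t (hl t)

lemma deriv2_nonpos_at_max {f f' : ℝ → ℝ} {c : ℝ}
    (hf : ∀ t, HasDerivAt f (f' t) t)
    (hf' : HasDerivAt f' c 0) (hmax : ∀ t, f t ≤ f 0) : c ≤ 0 := by
  by_contra hc
  push_neg at hc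
  have h0 : f' 0 = 0 := by
    have hlm : IsLocalMax f 0 := Filter.Eventually.of_forall hmax
    have := hlm.deriv_eq_zero
    rwa [(hf 0).deriv] at this
  have hsl : Filter.Tendsto (slope f' 0) (nhdsWithin 0 {(0:ℝ)}ᶜ) (nhds c) :=
    hasDerivAt_iff_tendsto_slope.mp hf'
  have hsl' : Filter.Tendsto (slope f' 0) (nhdsWithin 0 (Set.Ioi 0)) (nhds c) :=
    hsl.mono_left (nhdsWithin_mono _ (fun x hx => ne_of_gt hx))
  have hev : ∀ᶠ t in nhdsWithin 0 (Set.Ioi 0), 0 < slope f' 0 t :=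
    hsl'.eventually (eventually_gt_nhds hc)
  rw [eventually_nhdsWithin_iff, Metric.eventually_nhds_iff] at hev
  obtain ⟨ε, hε, hevε⟩ := hev
  have hpos : ∀ t ∈ Set.Ioo (0:ℝ) ε, 0 < f' t := by
    intro t ht
    have h1 : 0 < slope f' 0 t := by
      apply hevε (by simp [abs_of_pos ht.1, ht.2]) ht.1
    rw [slope_def_field, h0] at h1
    have : 0 < (f' t) / t := by simpa using h1
    have := mul_pos this ht.1
    rwa [div_mul_cancel₀ _ (ne_of_gt ht.1)] at this
  have hmono : StrictMonoOn f (Set.Icc 0 (ε/2)) := by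
    apply strictMonoOn_of_deriv_pos (convex_Icc 0 (ε/2))
    · exact (continuous_iff_continuousAt.mpr (fun x => (hf x).continuousAt)).continuousOn
    · intro x hx
      rw [interior_Icc] at hx
      rw [(hf x).deriv]
      exact hpos x ⟨hx.1, lt_of_lt_of_le hx.2 (by linarith)⟩
  have : f 0 < f (ε/2) := hmono ⟨le_refl 0, by positivity⟩ ⟨by positivity, le_refl _⟩ (by positivity)
  exact absurd (hmax (ε/2)) (not_le.mpr this)

lemma deriv_nonpos_of_antitone_right {g : ℝ → ℝ} {d r : ℝ}
    (hg : HasDerivAt g d r) (h : ∀ t, r ≤ t → g t ≤ g r) : d ≤ 0 := by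
  have hsl : Filter.Tendsto (slope g r) (nhdsWithin r (Set.Ioi r)) (nhds d) :=
    (hasDerivAt_iff_tendsto_slope.mp hg).mono_left
      (nhdsWithin_mono _ (fun x hx => ne_of_gt hx))
  refine le_of_tendsto hsl ?_
  filter_upwards [self_mem_nhdsWithin] with t ht
  rw [slope_def_field]
  have ht' : r < t := ht
  apply div_nonpos_iff.mpr
  exact Or.inr ⟨by linarith [h t ht'.le], by linarith⟩

end Aux

set_option maxHeartbeats 1000000

/-- Comparison-principle decay estimate: if a positive `C²` radial, radially
nonincreasing function satisfies `−Δu + (κ²/2)u ≤ 0` for `|x| ≥ R₀ = L₀/κ`, with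
`u ≤ M` on `|x| = R₀` and `L₀ ≥ 2(N−1)`, then `u(x) ≤ M e^{L₀/2} e^{−κ|x|/2}`
for all `|x| ≥ R₀`. -/
theorem stmt17 (N : ℕ) (hN : 3 ≤ N) (L₀ κ M : ℝ)
    (hL₀ : 2 * ((N : ℝ) - 1) ≤ L₀) (hκ : 0 < κ)
    (u : EuclideanSpace ℝ (Fin N) → ℝ) (hu : ContDiff ℝ 2 u)
    (hupos : ∀ x, 0 < u x)
    (hmono : ∀ x y : EuclideanSpace ℝ (Fin N), ‖x‖ ≤ ‖y‖ → u y ≤ u x)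
    (hsub : ∀ x : EuclideanSpace ℝ (Fin N), L₀ / κ ≤ ‖x‖ →
      -(∑ i : Fin N, fderiv ℝ (fderiv ℝ u) x (EuclideanSpace.single i 1)
          (EuclideanSpace.single i 1)) + κ ^ 2 / 2 * u x ≤ 0)
    (hM : ∀ x : EuclideanSpace ℝ (Fin N), ‖x‖ = L₀ / κ → u x ≤ M) :
    ∀ x : EuclideanSpace ℝ (Fin N), L₀ / κ ≤ ‖x‖ →
      u x ≤ M * Real.exp (L₀ / 2) * Real.exp (-(κ * ‖x‖) / 2) := by
  have h3 : (3:ℝ) ≤ (N:ℝ) := by exact_mod_cast hN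
  have hL₀pos : 0 < L₀ := by linarith
  set R₀ : ℝ := L₀ / κ with hR₀def
  have hR₀pos : 0 < R₀ := div_pos hL₀pos hκ
  set μ : ℝ := κ / 2 with hμdef
  have hμpos : 0 < μ := by positivity
  have i0 : Fin N := ⟨0, by omega⟩
  set e : Fin N → EuclideanSpace ℝ (Fin N) := fun i => EuclideanSpace.single i 1 with hedef
  have hnorme : ∀ i, ‖e i‖ = 1 := by
    intro i; simp [hedef, EuclideanSpace.norm_single]
  have hnorm_smul : ∀ (t : ℝ) i, ‖t • e i‖ = |t| := by
    intro t i; rw [norm_smul, hnorme, mul_one, Real.norm_eq_abs]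
  set g : ℝ → ℝ := fun t => u (t • e i0) with hgdef
  -- u is radial
  have hrad : ∀ x : EuclideanSpace ℝ (Fin N), u x = g ‖x‖ := by
    intro x
    have h1 : ‖(‖x‖ : ℝ) • e i0‖ = ‖x‖ := by
      rw [hnorm_smul]; exact abs_of_nonneg (norm_nonneg x)
    exact le_antisymm (hmono _ x h1.le) (hmono x _ h1.ge)
  have hgpos : ∀ r, 0 < g r := fun r => hupos _
  have hganti : ∀ s t : ℝ, 0 ≤ s → s ≤ t → g t ≤ g s := by
    intro s t hs hst
    apply hmono
    rw [hnorm_smul, hnorm_smul, abs_of_nonneg hs, abs_of_nonneg (hs.trans hst)]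
    exact hst
  set G1 : ℝ → ℝ := fun r => fderiv ℝ u (r • e i0) (e i0) with hG1def
  set G2 : ℝ → ℝ := fun r => fderiv ℝ (fderiv ℝ u) (r • e i0) (e i0) (e i0) with hG2def
  have hg1 : ∀ r, HasDerivAt g (G1 r) r := by
    intro r
    have := (line_derivs u hu 0 (e i0) r).1
    simp only [zero_add] at this
    exact this
  have hg2 : ∀ r, HasDerivAt G1 (G2 r) r := by
    intro r
    have := (line_derivs u hu 0 (e i0) r).2
    simp only [zero_add] at this
    exact this
  -- off-diagonal second derivatives are nonpositive at points r • e i0, r > 0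
  have hcross : ∀ r : ℝ, 0 < r → ∀ i : Fin N, i ≠ i0 →
      fderiv ℝ (fderiv ℝ u) (r • e i0) (e i) (e i) ≤ 0 := by
    intro r hr i hi
    set a : EuclideanSpace ℝ (Fin N) := r • e i0 with hadef
    have horth : (inner ℝ (a) ((1:ℝ) • e i) : ℝ) = 0 := by
      simp [hadef, hedef, real_inner_smul_left, real_inner_smul_right,
        EuclideanSpace.inner_single_left, EuclideanSpace.single_apply]
      intro hcon
      exact absurd hcon.symm hi
    have hnorm_ge : ∀ s : ℝ, ‖a‖ ≤ ‖a + s • e i‖ := by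
      intro s
      have horth' : (inner ℝ a (s • e i) : ℝ) = 0 := by
        have : (s • e i : EuclideanSpace ℝ (Fin N)) = s • ((1:ℝ) • e i) := by simp
        rw [this, real_inner_smul_right, horth, mul_zero]
      have hsq : ‖a + s • e i‖ ^ 2 = ‖a‖ ^ 2 + ‖s • e i‖ ^ 2 := by
        rw [norm_add_sq_real, horth']; ring
      nlinarith [norm_nonneg a, norm_nonneg (a + s • e i), sq_nonneg ‖s • e i‖]
    have hmax : ∀ s : ℝ, u (a + s • e i) ≤ u (a + (0:ℝ) • e i) := by
      intro s
      have : u (a + s • e i) ≤ u a := hmono a _ (hnorm_ge s)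
      simpa using this
    have hd2 := deriv2_nonpos_at_max
      (f := fun s => u (a + s • e i)) (f' := fun s => fderiv ℝ u (a + s • e i) (e i))
      (fun t => (line_derivs u hu a (e i) t).1) ((line_derivs u hu a (e i) 0).2) hmax
    simpa using hd2
  -- key differential inequality : G2 r ≥ (κ²/2) g r for r ≥ R₀
  have hkey : ∀ r : ℝ, R₀ ≤ r → κ ^ 2 / 2 * g r ≤ G2 r := by
    intro r hr
    have hrpos : 0 < r := hR₀pos.trans_le hr
    have hx : R₀ ≤ ‖r • e i0‖ := by
      rw [hnorm_smul, abs_of_pos hrpos]; exact hr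
    have h1 := hsub (r • e i0) hx
    have hsum : ∑ i : Fin N, fderiv ℝ (fderiv ℝ u) (r • e i0)
        (EuclideanSpace.single i 1) (EuclideanSpace.single i 1) ≤ G2 r := by
      have hsplit : ∑ i : Fin N, fderiv ℝ (fderiv ℝ u) (r • e i0) (e i) (e i)
          = fderiv ℝ (fderiv ℝ u) (r • e i0) (e i0) (e i0)
            + ∑ i ∈ Finset.univ.erase i0, fderiv ℝ (fderiv ℝ u) (r • e i0) (e i) (e i) :=
        (Finset.add_sum_erase _ _ (Finset.mem_univ i0)).symm
      have hrest : ∑ i ∈ Finset.univ.erase i0,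
          fderiv ℝ (fderiv ℝ u) (r • e i0) (e i) (e i) ≤ 0 := by
        apply Finset.sum_nonpos
        intro i hi
        exact hcross r hrpos i (Finset.ne_of_mem_erase hi)
      calc ∑ i : Fin N, fderiv ℝ (fderiv ℝ u) (r • e i0)
            (EuclideanSpace.single i 1) (EuclideanSpace.single i 1)
          = ∑ i : Fin N, fderiv ℝ (fderiv ℝ u) (r • e i0) (e i) (e i) := by rfl
        _ ≤ G2 r := by rw [hsplit]; simpa [hG2def] using hrest
    have : κ ^ 2 / 2 * u (r • e i0) ≤ ∑ i : Fin N, fderiv ℝ (fderiv ℝ u) (r • e i0)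
        (EuclideanSpace.single i 1) (EuclideanSpace.single i 1) := by linarith
    exact le_trans (by simpa [hgdef] using this) hsum
  -- G1 is nonpositive on positive reals
  have hG1nonpos : ∀ r : ℝ, 0 ≤ r → G1 r ≤ 0 := by
    intro r hr
    exact deriv_nonpos_of_antitone_right (hg1 r) (fun t ht => hganti r t hr ht)
  -- define h = G1 + μ g  and show h ≤ 0 on [R₀, ∞)
  set h : ℝ → ℝ := fun r => G1 r + μ * g r with hhdef
  have hhderiv : ∀ r, HasDerivAt h (G2 r + μ * G1 r) r :=
    fun r => (hg2 r).add ((hg1 r).const_mul μ)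
  set φ : ℝ → ℝ := fun r => h r * Real.exp (-μ * r) with hφdef
  have hφderiv : ∀ r, HasDerivAt φ ((G2 r + μ * G1 r - μ * h r) * Real.exp (-μ * r)) r := by
    intro r
    have hexp : HasDerivAt (fun r : ℝ => Real.exp (-μ * r)) (Real.exp (-μ * r) * (-μ)) r := by
      simpa using ((hasDerivAt_id r).const_mul (-μ)).exp
    have := (hhderiv r).mul hexp
    exact this.congr_deriv (by ring)
  have hφmono : MonotoneOn φ (Set.Ici R₀) := by
    apply monotoneOn_of_deriv_nonneg (convex_Ici R₀)
    · exact (continuous_iff_continuousAt.mpr (fun x => (hφderiv x).continuousAt)).continuousOn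
    · intro x _
      exact ((hφderiv x).differentiableAt).differentiableWithinAt
    · intro x hx
      rw [interior_Ici] at hx
      rw [(hφderiv x).deriv]
      apply mul_nonneg _ (Real.exp_pos _).le
      have h1 := hkey x hx.le
      have h2 : G2 x + μ * G1 x - μ * h x = G2 x - μ ^ 2 * g x := by
        rw [hhdef]; ring
      rw [h2]
      have hμ2 : μ ^ 2 ≤ κ ^ 2 / 2 := by
        rw [hμdef]; nlinarith [sq_nonneg κ]
      nlinarith [hgpos x]
  have hhnonpos : ∀ r : ℝ, R₀ ≤ r → h r ≤ 0 := by
    intro r₁ hr₁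
    by_contra hcon
    push_neg at hcon
    set A : ℝ := μ * g R₀ / h r₁ + 1 with hAdef
    have hApos : 1 ≤ A := by
      rw [hAdef]
      have : 0 < μ * g R₀ / h r₁ := div_pos (mul_pos hμpos (hgpos R₀)) hcon
      linarith
    set r₂ : ℝ := r₁ + (1/μ) * Real.log A with hr₂def
    have hlogA : 0 ≤ Real.log A := Real.log_nonneg hApos
    have hr₂ge : r₁ ≤ r₂ := by
      rw [hr₂def]
      have : 0 ≤ (1/μ) * Real.log A := by positivity
      linarith
    have hφle : φ r₁ ≤ φ r₂ := hφmono hr₁ (hr₁.trans hr₂ge) hr₂ge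
    have hexp_eq : Real.exp (μ * (r₂ - r₁)) = A := by
      rw [hr₂def]
      have : μ * (r₁ + 1/μ * Real.log A - r₁) = Real.log A := by
        field_simp
        ring
      rw [this, Real.exp_log (by linarith)]
    have hA : h r₁ * A ≤ h r₂ := by
      have hpe : (0:ℝ) < Real.exp (-μ * r₂) := Real.exp_pos _
      rw [hφdef] at hφle
      simp only at hφle
      have hexprel : Real.exp (-μ * r₁) = Real.exp (μ * (r₂ - r₁)) * Real.exp (-μ * r₂) := by
        rw [← Real.exp_add]; ring_nf
      rw [hexprel, hexp_eq] at hφle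
      have h3' : (h r₁ * A) * Real.exp (-μ * r₂) ≤ h r₂ * Real.exp (-μ * r₂) := by
        calc (h r₁ * A) * Real.exp (-μ * r₂) = h r₁ * (A * Real.exp (-μ * r₂)) := by ring
          _ ≤ _ := hφle
      exact le_of_mul_le_mul_right h3' hpe
    have hgle : g r₂ ≤ g R₀ := hganti R₀ r₂ hR₀pos.le (hr₁.trans hr₂ge)
    have hG1r₂ : G1 r₂ ≤ 0 := hG1nonpos r₂ (hR₀pos.le.trans (hr₁.trans hr₂ge))
    have hhr₂ : h r₂ = G1 r₂ + μ * g r₂ := rfl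
    have : h r₁ * A = μ * g R₀ + h r₁ := by
      rw [hAdef]
      field_simp
    nlinarith [hgpos r₂]
  -- ψ(r) = g(r) e^{μ r} is antitone on [R₀, ∞)
  set ψ : ℝ → ℝ := fun r => g r * Real.exp (μ * r) with hψdef
  have hψderiv : ∀ r, HasDerivAt ψ (h r * Real.exp (μ * r)) r := by
    intro r
    have hexp : HasDerivAt (fun r : ℝ => Real.exp (μ * r)) (Real.exp (μ * r) * μ) r := by
      simpa using ((hasDerivAt_id r).const_mul μ).exp
    have := (hg1 r).mul hexp
    exact this.congr_deriv (by rw [hhdef]; ring)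
  have hψanti : AntitoneOn ψ (Set.Ici R₀) := by
    apply antitoneOn_of_deriv_nonpos (convex_Ici R₀)
    · exact (continuous_iff_continuousAt.mpr (fun x => (hψderiv x).continuousAt)).continuousOn
    · intro x _
      exact ((hψderiv x).differentiableAt).differentiableWithinAt
    · intro x hx
      rw [interior_Ici] at hx
      rw [(hψderiv x).deriv]
      exact mul_nonpos_of_nonpos_of_nonneg (hhnonpos x hx.le) (Real.exp_pos _).le
  -- conclusion
  intro x hx
  have hgM : g R₀ ≤ M := by
    apply hM
    rw [hnorm_smul, abs_of_pos hR₀pos]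
  have hψle : ψ ‖x‖ ≤ ψ R₀ := hψanti (Set.mem_Ici.mpr le_rfl) (Set.mem_Ici.mpr hx) hx
  rw [hψdef] at hψle
  simp only at hψle
  have hexp1 : (0:ℝ) < Real.exp (μ * ‖x‖) := Real.exp_pos _
  have hstep : g ‖x‖ ≤ M * Real.exp (μ * R₀) * Real.exp (-(μ * ‖x‖)) := by
    have h1 : g ‖x‖ * Real.exp (μ * ‖x‖) ≤ M * Real.exp (μ * R₀) := by
      calc g ‖x‖ * Real.exp (μ * ‖x‖) ≤ g R₀ * Real.exp (μ * R₀) := hψle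
        _ ≤ M * Real.exp (μ * R₀) :=
          mul_le_mul_of_nonneg_right hgM (Real.exp_pos _).le
    have h2 : Real.exp (-(μ * ‖x‖)) = (Real.exp (μ * ‖x‖))⁻¹ := by
      rw [Real.exp_neg]
    rw [h2, ← div_eq_mul_inv, le_div_iff₀ hexp1]
    exact h1
  rw [hrad x]
  have hμR₀ : μ * R₀ = L₀ / 2 := by
    rw [hμdef, hR₀def]
    field_simp
  have harg : -(μ * ‖x‖) = -(κ * ‖x‖) / 2 := by
    rw [hμdef]; ring
  rw [← hμR₀, ← harg]
  exact hstep
end
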